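/- Let G be a finite nilpotent group of class 2. Then G has a hyperbolic pair (normal abelian subgroups M, N with G = MN and M ∩ N ≤ Z(G)) if and only if the adjoint ring A(∘_G) of the commutation bimap ∘_G : G/Z(G) × G/Z(G) → [G,G] contains an idempotent e with e* = 1 − e, where * is the natural involution of A(∘_G). -/

import Mathlib

open scoped commutatorElement

section Aux
variable {G : Type*} [Group G]

private lemma comm_mem_center (hG : commutator G ≤ Subgroup.center G) (x y : G) :
    ⁅x, y⁆ ∈ Subgroup.center G :=
  hG (by rw [commutator_def]
         exact Subgroup.commutator_mem_commutator (Subgroup.mem_top x) (Subgroup.mem_top y))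

private lemma comm_central_left {z : G} (hz : z ∈ Subgroup.center G) (a b : G) :
    ⁅a * z, b⁆ = ⁅a, b⁆ := by
  have h := Subgroup.mem_center_iff.mp hz
  calc ⁅a * z, b⁆ = a * (z * b) * z⁻¹ * a⁻¹ * b⁻¹ := by
        simp only [commutatorElement_def]; group
    _ = a * (b * z) * z⁻¹ * a⁻¹ * b⁻¹ := by rw [h b]
    _ = ⁅a, b⁆ := by simp only [commutatorElement_def]; group

private lemma comm_central_right {z : G} (hz : z ∈ Subgroup.center G) (a b : G) :
    ⁅a, b * z⁆ = ⁅a, b⁆ := by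
  have h := Subgroup.mem_center_iff.mp hz
  calc ⁅a, b * z⁆ = a * b * (z * a⁻¹) * z⁻¹ * b⁻¹ := by
        simp only [commutatorElement_def]; group
    _ = a * b * (a⁻¹ * z) * z⁻¹ * b⁻¹ := by rw [h a⁻¹]
    _ = ⁅a, b⁆ := by simp only [commutatorElement_def]; group

private lemma comm_congr {a a' b b' : G}
    (h1 : (QuotientGroup.mk a : G ⧸ Subgroup.center G) = QuotientGroup.mk a')
    (h2 : (QuotientGroup.mk b : G ⧸ Subgroup.center G) = QuotientGroup.mk b') :
    ⁅a, b⁆ = ⁅a', b'⁆ := by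
  rw [QuotientGroup.eq] at h1 h2
  have e1 : a' = a * (a⁻¹ * a') := by group
  have e2 : b' = b * (b⁻¹ * b') := by group
  rw [e1, e2, comm_central_left h1, comm_central_right h2]

private lemma comm_mul_left (hG : commutator G ≤ Subgroup.center G) (a b c : G) :
    ⁅a * b, c⁆ = ⁅a, c⁆ * ⁅b, c⁆ := by
  have h := Subgroup.mem_center_iff.mp (comm_mem_center hG b c)
  calc ⁅a * b, c⁆ = a * ⁅b, c⁆ * a⁻¹ * ⁅a, c⁆ := by
        simp only [commutatorElement_def]; group
    _ = ⁅b, c⁆ * a * a⁻¹ * ⁅a, c⁆ := by rw [h a]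
    _ = ⁅b, c⁆ * ⁅a, c⁆ := by group
    _ = ⁅a, c⁆ * ⁅b, c⁆ := (h ⁅a, c⁆).symm

private lemma comm_mul_right (hG : commutator G ≤ Subgroup.center G) (a b c : G) :
    ⁅a, b * c⁆ = ⁅a, b⁆ * ⁅a, c⁆ := by
  have h := Subgroup.mem_center_iff.mp (comm_mem_center hG a c)
  calc ⁅a, b * c⁆ = ⁅a, b⁆ * (b * ⁅a, c⁆) * b⁻¹ := by
        simp only [commutatorElement_def]; group
    _ = ⁅a, b⁆ * (⁅a, c⁆ * b) * b⁻¹ := by rw [h b]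
    _ = ⁅a, b⁆ * ⁅a, c⁆ := by group

private lemma mk_conj (hG : commutator G ≤ Subgroup.center G) (g n : G) :
    (QuotientGroup.mk (g * n * g⁻¹) : G ⧸ Subgroup.center G) = QuotientGroup.mk n := by
  rw [QuotientGroup.eq]
  have h : (g * n * g⁻¹)⁻¹ * n = ⁅g, n⁻¹⁆ := by
    simp only [commutatorElement_def]; group
  rw [h]; exact comm_mem_center hG _ _

end Aux

open scoped Pointwise

/-- A finite nilpotent group `G` of class 2 has a hyperbolic pair (normal abelian
subgroups `M, N` with `G = MN` and `M ∩ N ≤ Z(G)`) if and only if the adjoint ring of the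
commutation bimap `∘_G : G/Z(G) × G/Z(G) → [G,G]` contains a hyperbolic idempotent, i.e. an
idempotent endomorphism `e` of `G/Z(G)` with `e* = 1 - e`: for all `x, y` (and representatives
`x'` of `e(xZ)` and `y'` of `(yZ)·(e(yZ))⁻¹`) one has `⁅x', y⁆ = ⁅x, y'⁆`. -/
theorem hyperbolic_pair_iff_hyperbolic_idempotent
    (G : Type*) [Group G] [Finite G] (hG : commutator G ≤ Subgroup.center G) :
    (∃ M N : Subgroup G, M.Normal ∧ N.Normal ∧
        (∀ a ∈ M, ∀ b ∈ M, a * b = b * a) ∧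
        (∀ a ∈ N, ∀ b ∈ N, a * b = b * a) ∧
        M ⊔ N = ⊤ ∧ M ⊓ N ≤ Subgroup.center G) ↔
    (∃ e : (G ⧸ Subgroup.center G) →* (G ⧸ Subgroup.center G),
        (∀ q, e (e q) = e q) ∧
        (∀ x y x' y' : G,
          (QuotientGroup.mk x' : G ⧸ Subgroup.center G) = e (QuotientGroup.mk x) →
          (QuotientGroup.mk y' : G ⧸ Subgroup.center G) =
            (QuotientGroup.mk y : G ⧸ Subgroup.center G) * (e (QuotientGroup.mk y))⁻¹ →
          ⁅x', y⁆ = ⁅x, y'⁆)) := by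
  constructor
  · rintro ⟨M, N, hMn, hNn, hMab, hNab, hsup, hint⟩
    classical
    -- decomposition g = m * n with m ∈ M, n ∈ N
    have hdecomp : ∀ g : G, ∃ m n : G, m ∈ M ∧ n ∈ N ∧ g = m * n := by
      intro g
      have hg : g ∈ ((M : Set G) * (N : Set G)) := by
        rw [← Subgroup.mul_normal, hsup]; trivial
      obtain ⟨m, hm, n, hn, h⟩ := hg
      exact ⟨m, n, hm, hn, h.symm⟩
    choose dm dn hdm hdn hdec using hdecomp
    set Z := Subgroup.center G with hZ
    set M' := M ⊔ Z with hM'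
    set N' := N ⊔ Z with hN'
    have hmemM' : ∀ g, g ∈ M' ↔ ∃ m ∈ M, ∃ z ∈ Z, m * z = g := by
      intro g
      rw [hM', ← SetLike.mem_coe, Subgroup.mul_normal, Set.mem_mul]
      simp only [SetLike.mem_coe]
    have hmemN' : ∀ g, g ∈ N' ↔ ∃ n ∈ N, ∃ z ∈ Z, n * z = g := by
      intro g
      rw [hN', ← SetLike.mem_coe, Subgroup.mul_normal, Set.mem_mul]
      simp only [SetLike.mem_coe]
    have hMM' : M ≤ M' := le_sup_left
    have hNN' : N ≤ N' := le_sup_left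
    have hZM' : Z ≤ M' := le_sup_right
    have hZN' : Z ≤ N' := le_sup_right
    -- M' ⊓ N' ≤ Z
    have hint' : ∀ g, g ∈ M' → g ∈ N' → g ∈ Z := by
      intro g hg1 hg2
      obtain ⟨m, hm, z, hz, hmz⟩ := (hmemM' g).mp hg1
      obtain ⟨n, hn, z', hz', hnz⟩ := (hmemN' g).mp hg2
      rw [hZ, Subgroup.mem_center_iff]
      intro h
      have h1 : ⁅g, dm h⁆ = 1 := by
        rw [← hmz, comm_central_left hz, commutatorElement_eq_one_iff_mul_comm]
        exact hMab m hm (dm h) (hdm h)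
      have h2 : ⁅g, dn h⁆ = 1 := by
        rw [← hnz, comm_central_left hz', commutatorElement_eq_one_iff_mul_comm]
        exact hNab n hn (dn h) (hdn h)
      have h3 : ⁅g, h⁆ = 1 := by
        rw [hdec h, comm_mul_right hG, h1, h2, one_mul]
      have := commutatorElement_eq_one_iff_mul_comm.mp h3
      rw [this]
    -- well-definedness
    have wd : ∀ m n m' n' : G, m ∈ M' → n ∈ N' → m' ∈ M' → n' ∈ N' → m * n = m' * n' →
        (QuotientGroup.mk m : G ⧸ Subgroup.center G) = QuotientGroup.mk m' := by
      intro m n m' n' hm hn hm' hn' h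
      rw [QuotientGroup.eq]
      have h2 : m⁻¹ * m' = n * n'⁻¹ := by
        have h3 : m * (n * n'⁻¹) = m * (m⁻¹ * m') := by rw [← mul_assoc, h]; group
        exact (mul_left_cancel h3).symm
      exact hint' _ (mul_mem (inv_mem hm) hm') (h2 ▸ mul_mem hn (inv_mem hn'))
    -- the homomorphism
    have map_mul : ∀ g1 g2 : G,
        (QuotientGroup.mk (dm (g1 * g2)) : G ⧸ Subgroup.center G) =
          QuotientGroup.mk (dm g1) * QuotientGroup.mk (dm g2) := by
      intro g1 g2
      rw [← QuotientGroup.mk_mul]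
      have hc : ⁅(dm g2)⁻¹, dn g1⁆ ∈ Z := comm_mem_center hG _ _
      have key : dm (g1 * g2) * dn (g1 * g2) =
          (dm g1 * dm g2) * (⁅(dm g2)⁻¹, dn g1⁆ * (dn g1 * dn g2)) := by
        calc dm (g1 * g2) * dn (g1 * g2) = g1 * g2 := (hdec _).symm
          _ = (dm g1 * dn g1) * (dm g2 * dn g2) := by rw [← hdec g1, ← hdec g2]
          _ = (dm g1 * dm g2) * (⁅(dm g2)⁻¹, dn g1⁆ * (dn g1 * dn g2)) := by
              simp only [commutatorElement_def]; group
      exact wd _ _ _ _ (hMM' (hdm _)) (hNN' (hdn _)) (hMM' (mul_mem (hdm g1) (hdm g2)))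
        (mul_mem (hZN' hc) (mul_mem (hNN' (hdn g1)) (hNN' (hdn g2)))) key
    let f : G →* G ⧸ Subgroup.center G :=
      MonoidHom.mk' (fun g => QuotientGroup.mk (dm g)) map_mul
    have hker : ∀ z ∈ Subgroup.center G, f z = 1 := by
      intro z hz
      show (QuotientGroup.mk (dm z) : G ⧸ Subgroup.center G) = 1
      have : (QuotientGroup.mk (dm z) : G ⧸ Subgroup.center G) = QuotientGroup.mk 1 :=
        wd _ _ _ _ (hMM' (hdm z)) (hNN' (hdn z)) (one_mem M') (hZN' hz)
          (by rw [← hdec z, one_mul])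
      rw [this, QuotientGroup.mk_one]
    refine ⟨QuotientGroup.lift (Subgroup.center G) f hker, ?_, ?_⟩
    · intro q
      induction q using QuotientGroup.induction_on with
      | _ g =>
        show (QuotientGroup.mk (dm (dm g)) : G ⧸ Subgroup.center G) = QuotientGroup.mk (dm g)
        exact wd _ _ _ _ (hMM' (hdm _)) (hNN' (hdn _)) (hMM' (hdm g)) (one_mem N')
          (by rw [← hdec (dm g), mul_one])
    · intro x y x' y' h1 h2
      have h1' : (QuotientGroup.mk x' : G ⧸ Subgroup.center G) = QuotientGroup.mk (dm x) := h1
      have h2' : (QuotientGroup.mk y' : G ⧸ Subgroup.center G) = QuotientGroup.mk (dn y) := by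
        rw [h2]
        show _ * ((QuotientGroup.mk (dm y) : G ⧸ Subgroup.center G))⁻¹ = _
        rw [← QuotientGroup.mk_inv, ← QuotientGroup.mk_mul]
        have : y * (dm y)⁻¹ = dm y * dn y * (dm y)⁻¹ := by rw [← hdec y]
        rw [this, mk_conj hG]
      have e1 : ⁅x', y⁆ = ⁅dm x, y⁆ := comm_congr h1' rfl
      have e2 : ⁅x, y'⁆ = ⁅x, dn y⁆ := comm_congr rfl h2'
      rw [e1, e2]
      have hxy : ⁅dm x, y⁆ = ⁅dm x, dm y⁆ * ⁅dm x, dn y⁆ := by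
        conv_lhs => rw [hdec y]
        rw [comm_mul_right hG]
      have hyx : ⁅x, dn y⁆ = ⁅dm x, dn y⁆ * ⁅dn x, dn y⁆ := by
        conv_lhs => rw [hdec x]
        rw [comm_mul_left hG]
      rw [hxy, hyx,
        commutatorElement_eq_one_iff_mul_comm.mpr (hMab _ (hdm x) _ (hdm y)),
        commutatorElement_eq_one_iff_mul_comm.mpr (hNab _ (hdn x) _ (hdn y)),
        one_mul, mul_one]
  · rintro ⟨e, hidem, hadj⟩
    set Z := Subgroup.center G with hZ
    let M : Subgroup G :=
      { carrier := {g | e (QuotientGroup.mk g) = 1}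
        one_mem' := by simp
        mul_mem' := by
          intro a b ha hb
          simp only [Set.mem_setOf_eq] at *
          rw [QuotientGroup.mk_mul, map_mul, ha, hb, one_mul]
        inv_mem' := by
          intro a ha
          simp only [Set.mem_setOf_eq] at *
          rw [QuotientGroup.mk_inv, map_inv, ha, inv_one] }
    let N : Subgroup G :=
      { carrier := {g | e (QuotientGroup.mk g) = QuotientGroup.mk g}
        one_mem' := by simp
        mul_mem' := by
          intro a b ha hb
          simp only [Set.mem_setOf_eq] at *
          rw [QuotientGroup.mk_mul, map_mul, ha, hb]
        inv_mem' := by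
          intro a ha
          simp only [Set.mem_setOf_eq] at *
          rw [QuotientGroup.mk_inv, map_inv, ha] }
    have hMmem : ∀ g, g ∈ M ↔ e (QuotientGroup.mk g) = 1 := fun _ => Iff.rfl
    have hNmem : ∀ g, g ∈ N ↔ e (QuotientGroup.mk g) = QuotientGroup.mk g := fun _ => Iff.rfl
    refine ⟨M, N, ?_, ?_, ?_, ?_, ?_, ?_⟩
    · constructor
      intro n hn g
      rw [hMmem] at *
      rw [mk_conj hG, hn]
    · constructor
      intro n hn g
      rw [hNmem] at *
      rw [mk_conj hG, hn]
    · intro a ha b hb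
      rw [hMmem] at ha hb
      rw [← commutatorElement_eq_one_iff_mul_comm]
      have h1 : (QuotientGroup.mk (1 : G) : G ⧸ Subgroup.center G) = e (QuotientGroup.mk a) := by
        rw [QuotientGroup.mk_one, ha]
      have h2 : (QuotientGroup.mk b : G ⧸ Subgroup.center G) =
          QuotientGroup.mk b * (e (QuotientGroup.mk b))⁻¹ := by
        rw [hb, inv_one, mul_one]
      have := hadj a b 1 b h1 h2
      rw [← this]
      simp only [commutatorElement_def]; group
    · intro a ha b hb
      rw [hNmem] at ha hb
      rw [← commutatorElement_eq_one_iff_mul_comm]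
      have h1 : (QuotientGroup.mk a : G ⧸ Subgroup.center G) = e (QuotientGroup.mk a) := ha.symm
      have h2 : (QuotientGroup.mk (1 : G) : G ⧸ Subgroup.center G) =
          QuotientGroup.mk b * (e (QuotientGroup.mk b))⁻¹ := by
        rw [hb, mul_inv_cancel, QuotientGroup.mk_one]
      have := hadj a b a 1 h1 h2
      rw [this]
      simp only [commutatorElement_def]; group
    · rw [eq_top_iff]
      intro g _
      obtain ⟨a, ha⟩ := QuotientGroup.mk_surjective (e (QuotientGroup.mk g) :
        G ⧸ Subgroup.center G)
      have hga : g * a⁻¹ ∈ M := by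
        rw [hMmem, QuotientGroup.mk_mul, QuotientGroup.mk_inv, map_mul, map_inv, ha,
          hidem, mul_inv_cancel]
      have haN : a ∈ N := by
        rw [hNmem, ha, hidem]
      have : g = (g * a⁻¹) * a := by group
      rw [this]
      exact mul_mem (le_sup_left (α := Subgroup G) hga) (le_sup_right (α := Subgroup G) haN)
    · intro g hg
      obtain ⟨hg1, hg2⟩ := Subgroup.mem_inf.mp hg
      rw [hMmem] at hg1
      rw [hNmem] at hg2
      have : (QuotientGroup.mk g : G ⧸ Subgroup.center G) = 1 := by rw [← hg2, hg1]
      exact (QuotientGroup.eq_one_iff g).mp this
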